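/- arXiv:1601.05460 — 3 statements merged into one kernel-verified Lean document; each statement's English description precedes it below -/
import Mathlib

section
/- For coprime M, N, the map j ↦ (j mod N scaled appropriately) gives an isomorphism of abelian groups Z/MN ≅ Z/M × Z/N under which the quadratic form kj²/(MN) mod 1 corresponds to (kN b²/M + kM a²/N) mod 1. -/
lemma aux_dvd (M N : ℕ) (h : Nat.Coprime M N) (k t bb aa : ℤ)
    (h1 : (M : ℤ) ∣ (N * bb - t)) (h2 : (N : ℤ) ∣ (M * aa - t)) :
    ((M : ℤ) * N) ∣ (k * N ^ 2 * bb ^ 2 + k * M ^ 2 * aa ^ 2 - k * t ^ 2) := by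
  have hco : IsCoprime (M : ℤ) (N : ℤ) := by
    rw [Int.isCoprime_iff_gcd_eq_one]
    exact_mod_cast h
  refine hco.mul_dvd ?_ ?_
  · have : k * N ^ 2 * bb ^ 2 + k * M ^ 2 * aa ^ 2 - k * t ^ 2
        = (N * bb - t) * (k * (N * bb + t)) + (M : ℤ) * (k * M * aa ^ 2) := by ring
    rw [this]
    exact dvd_add (h1.mul_right _) (dvd_mul_right _ _)
  · have : k * N ^ 2 * bb ^ 2 + k * M ^ 2 * aa ^ 2 - k * t ^ 2
        = (M * aa - t) * (k * (M * aa + t)) + (N : ℤ) * (k * N * bb ^ 2) := by ring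
    rw [this]
    exact dvd_add (h2.mul_right _) (dvd_mul_right _ _)

/-- For coprime `M, N`, there is an isomorphism of abelian groups
`ℤ/MN ≅ ℤ/M × ℤ/N` under which the quadratic form `kj²/(MN) mod 1`
corresponds to `(kN b²/M + kM a²/N) mod 1`. -/
theorem stmt_1 (M N : ℕ) (hM : 0 < M) (hN : 0 < N) (h : Nat.Coprime M N)
    (k : ℤ) (hk : IsCoprime k (M * N : ℤ)) :
    ∃ φ : ZMod (M * N) ≃+ ZMod M × ZMod N,
      ∀ j : ZMod (M * N),
        (((k * N * ((φ j).1.val : ℤ) ^ 2 : ℚ) / M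
            + (k * M * ((φ j).2.val : ℤ) ^ 2 : ℚ) / N : ℚ) : AddCircle (1 : ℚ))
          = (((k * (j.val : ℤ) ^ 2 : ℚ) / (M * N) : ℚ) : AddCircle (1 : ℚ)) := by
  haveI : NeZero M := ⟨hM.ne'⟩
  haveI : NeZero N := ⟨hN.ne'⟩
  haveI : NeZero (M * N) := ⟨by positivity⟩
  refine ⟨((ZMod.chineseRemainder h).toAddEquiv).trans
      (AddEquiv.prodCongr (AddAut.mulLeft (ZMod.unitOfCoprime N h.symm)⁻¹)
        (AddAut.mulLeft (ZMod.unitOfCoprime M h)⁻¹)), ?_⟩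
  intro j
  set b : ZMod M := ((ZMod.unitOfCoprime N h.symm)⁻¹ : (ZMod M)ˣ)
      * ((ZMod.chineseRemainder h) j).1 with hb
  set a : ZMod N := ((ZMod.unitOfCoprime M h)⁻¹ : (ZMod N)ˣ)
      * ((ZMod.chineseRemainder h) j).2 with ha
  have hφ1 : (((ZMod.chineseRemainder h).toAddEquiv.trans
      (AddEquiv.prodCongr (AddAut.mulLeft (ZMod.unitOfCoprime N h.symm)⁻¹)
        (AddAut.mulLeft (ZMod.unitOfCoprime M h)⁻¹))) j) = (b, a) := rfl
  rw [hφ1]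
  -- the components of chineseRemainder are casts
  have hcr : ((ZMod.chineseRemainder h) j) = ZMod.castHom
      (show Nat.lcm M N ∣ M * N by simp [Nat.lcm_dvd_iff]) (ZMod M × ZMod N) j := rfl
  have hc1 : ((ZMod.chineseRemainder h) j).1 = ((j.val : ℕ) : ZMod M) := by
    rw [hcr, ZMod.castHom_apply, Prod.fst_zmod_cast, ← ZMod.natCast_val]
  have hc2 : ((ZMod.chineseRemainder h) j).2 = ((j.val : ℕ) : ZMod N) := by
    rw [hcr, ZMod.castHom_apply, Prod.snd_zmod_cast, ← ZMod.natCast_val]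
  -- key congruences
  have hNb : (M : ℤ) ∣ ((N : ℤ) * b.val - (j.val : ℤ)) := by
    rw [← ZMod.intCast_zmod_eq_zero_iff_dvd]
    push_cast
    rw [ZMod.natCast_val b, ZMod.cast_id, hb, hc1, ← mul_assoc]
    rw [show ((N : ℕ) : ZMod M) = ((ZMod.unitOfCoprime N h.symm : (ZMod M)ˣ) : ZMod M) from
        (ZMod.coe_unitOfCoprime N h.symm).symm,
      ← Units.val_mul, mul_inv_cancel, Units.val_one, one_mul, sub_self]
  have hMa : (N : ℤ) ∣ ((M : ℤ) * a.val - (j.val : ℤ)) := by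
    rw [← ZMod.intCast_zmod_eq_zero_iff_dvd]
    push_cast
    rw [ZMod.natCast_val a, ZMod.cast_id, ha, hc2, ← mul_assoc]
    rw [show ((M : ℕ) : ZMod N) = ((ZMod.unitOfCoprime M h : (ZMod N)ˣ) : ZMod N) from
        (ZMod.coe_unitOfCoprime M h).symm,
      ← Units.val_mul, mul_inv_cancel, Units.val_one, one_mul, sub_self]
  obtain ⟨z, hz⟩ := aux_dvd M N h k (j.val : ℤ) (b.val : ℤ) (a.val : ℤ) hNb hMa
  -- now the rational computation
  have hMQ : (M : ℚ) ≠ 0 := by exact_mod_cast hM.ne'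
  have hNQ : (N : ℚ) ≠ 0 := by exact_mod_cast hN.ne'
  have hzQ : ((k : ℚ) * (N : ℚ) ^ 2 * ((b.val : ℤ) : ℚ) ^ 2
        + (k : ℚ) * (M : ℚ) ^ 2 * ((a.val : ℤ) : ℚ) ^ 2
        - (k : ℚ) * ((j.val : ℤ) : ℚ) ^ 2) = (M : ℚ) * (N : ℚ) * (z : ℚ) := by
    exact_mod_cast congrArg (Int.cast : ℤ → ℚ) hz
  have key : (k * N * ((b.val : ℤ)) ^ 2 : ℚ) / M + (k * M * ((a.val : ℤ)) ^ 2 : ℚ) / N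
      = (k * ((j.val : ℤ)) ^ 2 : ℚ) / (M * N) + (z : ℚ) * 1 := by
    rw [div_add_div _ _ hMQ hNQ, div_add' _ _ _ (mul_ne_zero hMQ hNQ),
      div_eq_div_iff (mul_ne_zero hMQ hNQ) (mul_ne_zero hMQ hNQ)]
    linear_combination ((M : ℚ) * N) * hzQ
  rw [key, AddCircle.coe_add]
  have hzero : (((z : ℚ) * 1 : ℚ) : AddCircle (1 : ℚ)) = 0 := by
    rw [← zsmul_eq_mul, AddCircle.coe_zsmul, AddCircle.coe_period, smul_zero]
  rw [hzero, add_zero]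
end

section
/- Let p be an odd prime, a ≥ 1, and n₁, n₂ integers coprime to p. The quadratic forms q₁(j) = n₁ j²/p^a mod 1 and q₂(j) = n₂ j²/p^a mod 1 on Z/p^a are isomorphic (i.e., there is a unit j of Z/p^a with n₁ ≡ n₂ j² mod p^a) if and only if n₁ n₂ is a quadratic residue mod p. -/
lemma aux_unit {p : ℕ} (hp : p.Prime) (a : ℕ) {n : ℤ} (h : ¬ (p : ℤ) ∣ n) :
    IsUnit (n : ZMod (p ^ a)) := by
  have hpz : Prime (p : ℤ) := Int.prime_iff_natAbs_prime.mpr (by simpa)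
  have hc : IsCoprime ((p : ℤ) ^ a) n := (hpz.coprime_iff_not_dvd.mpr h).pow_left
  obtain ⟨u, v, huv⟩ := hc
  refine IsUnit.of_mul_eq_one (v : ZMod (p ^ a)) ?_
  have := congrArg (fun z : ℤ => (z : ZMod (p ^ a))) huv
  push_cast at this
  rw [show ((p : ZMod (p ^ a)) ^ a) = ((p ^ a : ℕ) : ZMod (p ^ a)) by push_cast; ring,
    ZMod.natCast_self] at this
  simpa [mul_comm] using this

/-- For `p` an odd prime, `a ≥ 1` and `n₁, n₂` coprime to `p`, the quadratic forms
`n₁ j²/p^a` and `n₂ j²/p^a` on `ℤ/p^a` are isomorphic (there is a unit `j` with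
`n₁ ≡ n₂ j² mod p^a`) iff `n₁ n₂` is a quadratic residue mod `p`. -/
theorem stmt_3 (p : ℕ) (hp : p.Prime) (hodd : Odd p) (a : ℕ) (ha : 1 ≤ a)
    (n₁ n₂ : ℤ) (h₁ : ¬ (p : ℤ) ∣ n₁) (h₂ : ¬ (p : ℤ) ∣ n₂) :
    (∃ j : (ZMod (p ^ a))ˣ, (n₁ : ZMod (p ^ a)) = (n₂ : ZMod (p ^ a)) * (j : ZMod (p ^ a)) ^ 2)
      ↔ ∃ x : ℤ, x ^ 2 ≡ n₁ * n₂ [ZMOD p] := by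
  haveI : Fact p.Prime := ⟨hp⟩
  haveI : NeZero (p ^ a) := ⟨pow_ne_zero a hp.pos.ne'⟩
  have hdvd : p ∣ p ^ a := dvd_pow_self p (by omega)
  set φ := ZMod.castHom hdvd (ZMod p) with hφ
  constructor
  · rintro ⟨j, hj⟩
    have hj' := congrArg φ hj
    simp only [map_mul, map_pow, map_intCast] at hj'
    set y : ZMod p := (n₂ : ZMod p) * φ (j : ZMod (p ^ a)) with hy
    refine ⟨(y.val : ℤ), ?_⟩
    rw [← ZMod.intCast_eq_intCast_iff]
    push_cast
    rw [ZMod.natCast_val, ZMod.cast_id]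
    rw [hy]
    rw [hj']
    ring
  · rintro ⟨x, hx⟩
    rw [← ZMod.intCast_eq_intCast_iff] at hx
    push_cast at hx
    have hu₁ : IsUnit (n₁ : ZMod (p ^ a)) := aux_unit hp a h₁
    have hu₂ : IsUnit (n₂ : ZMod (p ^ a)) := aux_unit hp a h₂
    set u₁ := hu₁.unit
    set u₂ := hu₂.unit
    set f := ZMod.unitsMap hdvd with hf
    set u : (ZMod (p ^ a))ˣ := u₂⁻¹ * u₁ with hu
    have hB : (n₂ : ZMod p) ≠ 0 := by
      rw [Ne, ZMod.intCast_zmod_eq_zero_iff_dvd]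
      exact_mod_cast h₂
    -- value of f u
    have hfval : ∀ w : (ZMod (p ^ a))ˣ, ((f w : (ZMod p)ˣ) : ZMod p) = φ (w : ZMod (p ^ a)) := by
      intro w; rfl
    have hAB : ((f u : (ZMod p)ˣ) : ZMod p) * (n₂ : ZMod p) = (n₁ : ZMod p) := by
      have h2 : φ (u₂ : ZMod (p ^ a)) = (n₂ : ZMod p) := by
        rw [IsUnit.unit_spec, map_intCast]
      have h1 : φ (u₁ : ZMod (p ^ a)) = (n₁ : ZMod p) := by
        rw [IsUnit.unit_spec, map_intCast]
      have hmm : f u * f u₂ = f u₁ := by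
        rw [← map_mul, hu, mul_comm u₂⁻¹ u₁, mul_assoc, inv_mul_cancel, mul_one]
      have key := congrArg (fun z : (ZMod p)ˣ => (z : ZMod p)) hmm
      simp only [Units.val_mul, hfval, h2, h1] at key
      rw [hfval]
      exact key
    -- f u is a square
    have hy : ((x : ZMod p) * (n₂ : ZMod p)⁻¹) ^ 2 = ((f u : (ZMod p)ˣ) : ZMod p) := by
      have : ((f u : (ZMod p)ˣ) : ZMod p) = (n₁ : ZMod p) * (n₂ : ZMod p)⁻¹ := by
        field_simp [hB] at hAB ⊢
        exact hAB
      rw [this]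
      field_simp [hB]
      rw [hx]; ring
    have hyne : (x : ZMod p) * (n₂ : ZMod p)⁻¹ ≠ 0 := by
      intro h0
      have := hy
      rw [h0] at this
      simp at this
      exact (f u).ne_zero this.symm
    set w : (ZMod p)ˣ := Units.mk0 _ hyne with hw
    have hfw : f u = w ^ 2 := by
      ext
      rw [Units.val_pow_eq_pow_val, hw, Units.val_mk0, hy]
    obtain ⟨v, hv⟩ := ZMod.unitsMap_surjective hdvd w
    set k : (ZMod (p ^ a))ˣ := u * (v ^ 2)⁻¹ with hk
    have hker : k ∈ f.ker := by
      rw [MonoidHom.mem_ker, hk, map_mul, map_inv, map_pow, hv, ← hfw, mul_inv_cancel]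
    -- cardinality of the kernel
    have hcardG : Nat.card (ZMod (p ^ a))ˣ = p ^ (a - 1) * (p - 1) := by
      rw [Nat.card_eq_fintype_card, ZMod.card_units_eq_totient,
        Nat.totient_prime_pow hp (by omega)]
    have hsurj : Function.Surjective f := ZMod.unitsMap_surjective hdvd
    have hrange : f.range = ⊤ := MonoidHom.range_eq_top.mpr hsurj
    have hcardR : Nat.card f.range = p - 1 := by
      rw [hrange, Nat.card_congr Subgroup.topEquiv.toEquiv, Nat.card_eq_fintype_card,
        ZMod.card_units_eq_totient, Nat.totient_prime hp]
    have hcardker : Nat.card f.ker = p ^ (a - 1) := by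
      have h3 := Subgroup.card_mul_index f.ker
      rw [Subgroup.index_ker, hcardR, hcardG] at h3
      have hp1 : 0 < p - 1 := by have := hp.two_le; omega
      exact Nat.eq_of_mul_eq_mul_right hp1 h3
    have hkpow : k ^ (p ^ (a - 1)) = 1 := by
      rw [← hcardker]
      have h4 : (⟨k, hker⟩ : f.ker) ^ (Nat.card f.ker) = 1 := pow_card_eq_one'
      have := congrArg (Subtype.val) h4
      simpa using this
    -- k is a square
    obtain ⟨t, ht⟩ : Odd (p ^ (a - 1)) := hodd.pow
    have hksq : k = (k ^ (t + 1)) ^ 2 := by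
      rw [← pow_mul]
      have : (t + 1) * 2 = p ^ (a - 1) + 1 := by omega
      rw [this, pow_succ, hkpow, one_mul]
    refine ⟨k ^ (t + 1) * v, ?_⟩
    have hfinal : u₁ = u₂ * (k ^ (t + 1) * v) ^ 2 := by
      have : (k ^ (t + 1) * v) ^ 2 = k * v ^ 2 := by
        rw [mul_pow, ← hksq]
      rw [this, hk, hu]
      group
    have := congrArg (fun z : (ZMod (p ^ a))ˣ => (z : ZMod (p ^ a))) hfinal
    simpa [Units.val_mul, u₁, u₂] using this
end

section
/- In the dihedral group fusion-type decomposition: for odd N > 1 the subring of the SO(N)₂ fusion ring spanned by 1, Z, Y₁, ..., Y_{(N-1)/2} is closed under multiplication and has rank (N+3)/2, equal to the number of conjugacy classes of the dihedral group of order 2N. -/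
/-- For odd `N > 1`, in any commutative ring realizing the `SO(N)₂` fusion
rules, the subring spanned by `1, Z, Y₁, …, Y_{(N-1)/2}` is closed under
multiplication, and its rank `2 + (N-1)/2 = (N+3)/2` equals the number of
conjugacy classes of the dihedral group of order `2N`. -/
theorem stmt_16 (N : ℕ) (hN : Odd N) (h1 : 1 < N)
    (R : Type*) [CommRing R] (z : R) (Y : ℕ → R)
    (hzz : z * z = 1)
    (hzY : ∀ i, 1 ≤ i → i ≤ (N - 1) / 2 → z * Y i = Y i)
    (hYY : ∀ i j, 1 ≤ i → i < j → j ≤ (N - 1) / 2 →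
      Y i * Y j = Y (min (i + j) (N - i - j)) + Y (j - i))
    (hYY' : ∀ i, 1 ≤ i → i ≤ (N - 1) / 2 →
      Y i * Y i = 1 + z + Y (min (2 * i) (N - 2 * i))) :
    (∀ x ∈ Submodule.span ℤ (insert (1 : R) (insert z (Y '' Set.Icc 1 ((N - 1) / 2)))),
      ∀ y ∈ Submodule.span ℤ (insert (1 : R) (insert z (Y '' Set.Icc 1 ((N - 1) / 2)))),
        x * y ∈ Submodule.span ℤ (insert (1 : R) (insert z (Y '' Set.Icc 1 ((N - 1) / 2))))) ∧
    2 + (N - 1) / 2 = (N + 3) / 2 ∧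
    Nat.card (ConjClasses (DihedralGroup N)) = (N + 3) / 2 := by
  obtain ⟨m, hm⟩ := hN
  set S : Set R := insert (1 : R) (insert z (Y '' Set.Icc 1 ((N - 1) / 2))) with hS
  have hmem1 : (1 : R) ∈ S := Set.mem_insert _ _
  have hmemz : z ∈ S := Set.mem_insert_of_mem _ (Set.mem_insert _ _)
  have hmemY : ∀ k, 1 ≤ k → k ≤ (N - 1) / 2 → Y k ∈ S := fun k hk1 hk2 =>
    Set.mem_insert_of_mem _ (Set.mem_insert_of_mem _ ⟨k, ⟨hk1, hk2⟩, rfl⟩)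
  have hYYgen : ∀ i j, 1 ≤ i → 1 ≤ j → i ≤ (N - 1) / 2 → j ≤ (N - 1) / 2 →
      Y i * Y j ∈ Submodule.span ℤ S := by
    intro i j hi1 hj1 hi2 hj2
    rcases lt_trichotomy i j with h | h | h
    · rw [hYY i j hi1 h hj2]
      exact add_mem (Submodule.subset_span (hmemY _ (by omega) (by omega)))
        (Submodule.subset_span (hmemY _ (by omega) (by omega)))
    · subst h
      rw [hYY' i hi1 hi2]
      exact add_mem (add_mem (Submodule.subset_span hmem1) (Submodule.subset_span hmemz))
        (Submodule.subset_span (hmemY _ (by omega) (by omega)))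
    · rw [mul_comm, hYY j i hj1 h hi2]
      exact add_mem (Submodule.subset_span (hmemY _ (by omega) (by omega)))
        (Submodule.subset_span (hmemY _ (by omega) (by omega)))
  have key : ∀ a ∈ S, ∀ b ∈ S, a * b ∈ Submodule.span ℤ S := by
    intro a ha b hb
    rcases ha with rfl | rfl | ⟨i, ⟨hi1, hi2⟩, rfl⟩
    · rw [one_mul]; exact Submodule.subset_span hb
    · rcases hb with rfl | rfl | ⟨j, ⟨hj1, hj2⟩, rfl⟩
      · rw [mul_one]; exact Submodule.subset_span hmemz
      · rw [hzz]; exact Submodule.subset_span hmem1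
      · rw [hzY j hj1 hj2]; exact Submodule.subset_span (hmemY j hj1 hj2)
    · rcases hb with rfl | rfl | ⟨j, ⟨hj1, hj2⟩, rfl⟩
      · rw [mul_one]; exact Submodule.subset_span (hmemY i hi1 hi2)
      · rw [mul_comm, hzY i hi1 hi2]; exact Submodule.subset_span (hmemY i hi1 hi2)
      · exact hYYgen i j hi1 hj1 hi2 hj2
  refine ⟨?_, by omega, DihedralGroup.card_conjClasses_odd ⟨m, hm⟩⟩
  intro x hx y hy
  have h := Submodule.mul_mem_mul hx hy
  rw [Submodule.span_mul_span] at h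
  refine Submodule.span_le.mpr ?_ h
  rintro p ⟨a, ha, b, hb, rfl⟩
  exact key a ha b hb
end
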